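/- For a unit vector ω ∈ ℝ³ and p ∈ ℝ³ define b_{ij}(ω,p) = δ_{ij} − ω_i p̂_j/(1 + p̂·ω) for i,j ∈ {1,2,3}. Then: (a) |b_{ij}(ω,p)| ≤ 2 p₀² + 1 for all i,j; and (b) there is an absolute constant C such that for any fixed x, p ∈ ℝ³, setting ω(y) = (x − y)/|x − y| for y ≠ x, one has | Σ_{j=1}^{3} ∂_{y_j} ( b_{ij}(ω(y), p) ) | ≤ C p₀² / |x − y| for each i ∈ {1,2,3} and all y ≠ x. -/

import Mathlib

noncomputable section

open Real MeasureTheory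
open scoped RealInnerProductSpace

/-- The momentum space `ℝ³`. -/
abbrev E3 : Type := EuclideanSpace ℝ (Fin 3)

/-- `p₀ = √(1 + |p|²)`. -/
def p0 (p : E3) : ℝ := Real.sqrt (1 + ‖p‖ ^ 2)

/-- `p̂ = p / p₀`. -/
def phat (p : E3) : E3 := (p0 p)⁻¹ • p

/-- The cross product in `ℝ³`. -/
def cross3 (a b : E3) : E3 :=
  (WithLp.equiv 2 (Fin 3 → ℝ)).symm
    ![a 1 * b 2 - a 2 * b 1, a 2 * b 0 - a 0 * b 2, a 0 * b 1 - a 1 * b 0]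

/-- The Glassey–Strauss coefficients `b_{ij}(ω,p) = δ_{ij} − ω_i p̂_j/(1 + p̂·ω)`. -/
def bmat (ω p : E3) (i j : Fin 3) : ℝ :=
  (if i = j then 1 else 0) - ω i * phat p j / (1 + ⟪phat p, ω⟫)

lemma p0_pos (p : E3) : 0 < p0 p := Real.sqrt_pos.mpr (by positivity)
lemma p0_sq (p : E3) : p0 p ^ 2 = 1 + ‖p‖ ^ 2 := Real.sq_sqrt (by positivity)
lemma one_le_p0 (p : E3) : 1 ≤ p0 p := by
  nlinarith [p0_sq p, p0_pos p, norm_nonneg p, sq_nonneg (‖p‖)]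
lemma norm_p_lt_p0 (p : E3) : ‖p‖ < p0 p := by
  nlinarith [p0_sq p, p0_pos p, norm_nonneg p]
lemma norm_phat (p : E3) : ‖phat p‖ = ‖p‖ / p0 p := by
  rw [phat, norm_smul, norm_inv, Real.norm_eq_abs, abs_of_pos (p0_pos p), inv_mul_eq_div]
lemma norm_phat_lt_one (p : E3) : ‖phat p‖ < 1 := by
  rw [norm_phat]; rw [div_lt_one (p0_pos p)]; exact norm_p_lt_p0 p
lemma phat_key (p : E3) : 1 / (2 * p0 p ^ 2) ≤ 1 - ‖phat p‖ := by
  rw [norm_phat]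
  rw [div_le_iff₀ (by nlinarith [p0_pos p])]
  have h1 := p0_sq p; have h2 := p0_pos p; have h3 := norm_nonneg p
  have h4 : 1 - ‖p‖ / p0 p = (p0 p - ‖p‖) / p0 p := by field_simp
  rw [h4, div_mul_eq_mul_div, le_div_iff₀ h2]
  nlinarith [sq_nonneg (p0 p - ‖p‖)]
lemma one_sub_sq_phat (p : E3) : 1 - ‖phat p‖ ^ 2 = (p0 p ^ 2)⁻¹ := by
  rw [norm_phat, div_pow, p0_sq]
  have h2 : (0:ℝ) < p0 p ^ 2 := pow_pos (p0_pos p) 2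
  field_simp [p0_sq]
  ring
lemma coord_abs_le (v : E3) (i : Fin 3) : |v i| ≤ ‖v‖ := by
  have h := abs_real_inner_le_norm v (EuclideanSpace.single i (1:ℝ))
  rw [EuclideanSpace.inner_single_right, EuclideanSpace.norm_single] at h
  simpa using h

lemma parta (ω p : E3) (hω : ‖ω‖ = 1) (i j : Fin 3) : |bmat ω p i j| ≤ 2 * (p0 p) ^ 2 + 1 := by
  have hq := norm_phat_lt_one p
  have hkey := phat_key p
  have hp0 := p0_pos p
  have hip : ⟪phat p, ω⟫ ≥ -‖phat p‖ := by
    have := abs_real_inner_le_norm (phat p) ω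
    rw [hω, mul_one] at this
    linarith [abs_le.mp this |>.1]
  have hden : 1 / (2 * p0 p ^ 2) ≤ 1 + ⟪phat p, ω⟫ := by linarith
  have hdpos : 0 < 1 + ⟪phat p, ω⟫ := lt_of_lt_of_le (by positivity) hden
  have h1 : |ω i * phat p j| ≤ 1 := by
    rw [abs_mul]
    have a1 : |ω i| ≤ 1 := hω ▸ coord_abs_le ω i
    have a2 : |phat p j| ≤ 1 := le_trans (coord_abs_le _ j) (le_of_lt hq)
    calc |ω i| * |phat p j| ≤ 1 * 1 := by
          exact mul_le_mul a1 a2 (abs_nonneg _) zero_le_one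
      _ = 1 := by ring
  have hfrac : |ω i * phat p j / (1 + ⟪phat p, ω⟫)| ≤ 2 * p0 p ^ 2 := by
    rw [abs_div, abs_of_pos hdpos, div_le_iff₀ hdpos]
    calc |ω i * phat p j| ≤ 1 := h1
      _ ≤ 2 * p0 p ^ 2 * (1 / (2 * p0 p ^ 2)) := by
          rw [mul_one_div, div_self (by nlinarith : (2:ℝ) * p0 p ^ 2 ≠ 0)]
      _ ≤ 2 * p0 p ^ 2 * (1 + ⟪phat p, ω⟫) := by
          apply mul_le_mul_of_nonneg_left hden (by nlinarith)
  have := abs_sub (if i = j then (1:ℝ) else 0) (ω i * phat p j / (1 + ⟪phat p, ω⟫))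
  unfold bmat
  have habs : |(if i = j then (1:ℝ) else 0)| ≤ 1 := by split <;> simp
  calc |(if i = j then (1:ℝ) else 0) - ω i * phat p j / (1 + ⟪phat p, ω⟫)|
      ≤ |(if i = j then (1:ℝ) else 0)| + |ω i * phat p j / (1 + ⟪phat p, ω⟫)| := abs_sub _ _
    _ ≤ 1 + 2 * p0 p ^ 2 := add_le_add habs hfrac
    _ = 2 * p0 p ^ 2 + 1 := by ring

section partb
variable (x p y : E3)

set_option maxHeartbeats 1000000 in
lemma partb (hy : y ≠ x) (i : Fin 3) :
    |∑ j : Fin 3,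
        fderiv ℝ (fun z : E3 => bmat (‖x - z‖⁻¹ • (x - z)) p i j) y
          (EuclideanSpace.single j 1)|
      ≤ 8 * (p0 p) ^ 2 / ‖x - y‖ := by
  have hu : x - y ≠ 0 := sub_ne_zero.mpr (Ne.symm hy)
  set q : E3 := phat p with hqdef
  set u : E3 := x - y with hudef
  set r : ℝ := ‖u‖ with hrdef
  have hr : 0 < r := norm_pos_iff.mpr hu
  set t : ℝ := ⟪q, u⟫ with htdef
  set d : ℝ := r + t with hddef
  have hq1 : ‖q‖ < 1 := norm_phat_lt_one p
  have ht : |t| ≤ ‖q‖ * r := by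
    simpa [htdef] using abs_real_inner_le_norm q u
  have hp2 : (0:ℝ) < p0 p ^ 2 := pow_pos (p0_pos p) 2
  have hd_lb : r / (2 * p0 p ^ 2) ≤ d := by
    have hk := phat_key p
    rw [← hqdef] at hk
    rw [div_le_iff₀ (by nlinarith : (0:ℝ) < 2 * p0 p ^ 2)] at hk
    have h2 : -(‖q‖ * r) ≤ t := neg_le_of_abs_le ht
    rw [div_le_iff₀ (by nlinarith : (0:ℝ) < 2 * p0 p ^ 2)]
    nlinarith [mul_le_mul_of_nonneg_left hk hr.le, norm_nonneg q]
  have hd_pos : 0 < d := lt_of_lt_of_le (div_pos hr (by nlinarith)) hd_lb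
  -- the comparison function
  set D : E3 → ℝ := fun z => ‖x - z‖ + ⟪q, x - z⟫ with hDdef
  have hDy : D y = d := rfl
  -- derivative of z ↦ x - z
  have hsub : HasFDerivAt (fun z : E3 => x - z)
      (0 - ContinuousLinearMap.id ℝ E3) y := (hasFDerivAt_const x y).sub (hasFDerivAt_id y)
  -- derivative of the norm part
  have hnsq : HasFDerivAt (fun z : E3 => ‖x - z‖ ^ 2)
      (2 • ((innerSL ℝ u).comp (0 - ContinuousLinearMap.id ℝ E3))) y := hsub.norm_sq
  have hnrm : HasFDerivAt (fun z : E3 => ‖x - z‖)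
      ((1 / (2 * Real.sqrt (‖u‖ ^ 2))) • (2 • ((innerSL ℝ u).comp (0 - ContinuousLinearMap.id ℝ E3)))) y := by
    have h := hnsq.sqrt (by positivity)
    have he : (fun z : E3 => Real.sqrt (‖x - z‖ ^ 2)) = fun z : E3 => ‖x - z‖ := by
      funext w; exact Real.sqrt_sq (norm_nonneg _)
    rwa [he] at h
  have hinn : HasFDerivAt (fun z : E3 => ⟪q, x - z⟫)
      ((innerSL ℝ q).comp (0 - ContinuousLinearMap.id ℝ E3)) y :=
    ((innerSL ℝ q).hasFDerivAt).comp y hsub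
  have hD : HasFDerivAt D
      ((1 / (2 * Real.sqrt (‖u‖ ^ 2))) • (2 • ((innerSL ℝ u).comp (0 - ContinuousLinearMap.id ℝ E3)))
        + (innerSL ℝ q).comp (0 - ContinuousLinearMap.id ℝ E3)) y := hnrm.add hinn
  set LD : E3 →L[ℝ] ℝ :=
      (1 / (2 * Real.sqrt (‖u‖ ^ 2))) • (2 • ((innerSL ℝ u).comp (0 - ContinuousLinearMap.id ℝ E3)))
        + (innerSL ℝ q).comp (0 - ContinuousLinearMap.id ℝ E3) with hLDdef
  have hDne : D y ≠ 0 := by rw [hDy]; exact ne_of_gt hd_pos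
  have hDinv : HasFDerivAt (fun z : E3 => (D z)⁻¹) ((-((D y) ^ 2)⁻¹) • LD) y :=
    (hasDerivAt_inv hDne).comp_hasFDerivAt y hD
  -- per-coordinate numerators
  have hN : ∀ j : Fin 3, HasFDerivAt (fun z : E3 => (x - z) i * q j)
      ((q j) • ((EuclideanSpace.proj i : E3 →L[ℝ] ℝ).comp (0 - ContinuousLinearMap.id ℝ E3))) y := by
    intro j
    exact ((EuclideanSpace.proj i : E3 →L[ℝ] ℝ).hasFDerivAt.comp y hsub).mul_const (q j)
  have hG : ∀ j : Fin 3, HasFDerivAt (fun z : E3 => (if i = j then (1:ℝ) else 0) - ((x - z) i * q j) * (D z)⁻¹)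
      (0 - (((x - y) i * q j) • ((-((D y) ^ 2)⁻¹) • LD)
        + (D y)⁻¹ • ((q j) • ((EuclideanSpace.proj i : E3 →L[ℝ] ℝ).comp (0 - ContinuousLinearMap.id ℝ E3))))) y := by
    intro j
    exact (hasFDerivAt_const _ _).sub ((hN j).mul hDinv)
  -- original function agrees with comparison function near y
  have hEq : ∀ j : Fin 3, (fun z : E3 => bmat (‖x - z‖⁻¹ • (x - z)) p i j)
      =ᶠ[nhds y] (fun z : E3 => (if i = j then (1:ℝ) else 0) - ((x - z) i * q j) * (D z)⁻¹) := by
    intro j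
    have hopen : {z : E3 | z ≠ x} ∈ nhds y := (isOpen_ne).mem_nhds hy
    filter_upwards [hopen] with z hz
    have hs : (0:ℝ) < ‖x - z‖ := norm_pos_iff.mpr (sub_ne_zero.mpr (Ne.symm hz))
    unfold bmat
    congr 1
    have h1 : (‖x - z‖⁻¹ • (x - z)) i = ‖x - z‖⁻¹ * (x - z) i := rfl
    have h2 : ⟪phat p, ‖x - z‖⁻¹ • (x - z)⟫ = ‖x - z‖⁻¹ * ⟪q, x - z⟫ := by
      rw [hqdef]; exact real_inner_smul_right _ _ _
    rw [h1, h2]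
    have h3 : 1 + ‖x - z‖⁻¹ * ⟪q, x - z⟫ = ‖x - z‖⁻¹ * D z := by
      rw [hDdef]; field_simp
    rw [h3, hqdef]
    rw [mul_assoc, mul_div_mul_left _ _ (inv_ne_zero hs.ne'), div_eq_mul_inv]
  have hval : ∀ j : Fin 3, fderiv ℝ (fun z : E3 => bmat (‖x - z‖⁻¹ • (x - z)) p i j) y
      (EuclideanSpace.single j 1)
      = (if i = j then (1:ℝ) else 0) * q j / d - u i * q j * (u j / r + q j) / d ^ 2 := by
    intro j
    rw [(hEq j).fderiv_eq, (hG j).fderiv]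
    have hsq : Real.sqrt (‖u‖ ^ 2) = r := Real.sqrt_sq (norm_nonneg _)
    simp only [ContinuousLinearMap.sub_apply, ContinuousLinearMap.add_apply,
      ContinuousLinearMap.smul_apply, ContinuousLinearMap.comp_apply,
      ContinuousLinearMap.zero_apply, ContinuousLinearMap.id_apply, innerSL_apply_apply,
      ContinuousLinearMap.coe_smul', Pi.smul_apply, smul_eq_mul, hLDdef,
      PiLp.proj_apply, hDy, hsq, zero_sub, inner_neg_right, EuclideanSpace.inner_single_right,
      conj_trivial, PiLp.neg_apply, EuclideanSpace.single_apply]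
    simp only [ContinuousLinearMap.neg_apply, ContinuousLinearMap.add_apply,
      ContinuousLinearMap.smul_apply, ContinuousLinearMap.comp_apply, ContinuousLinearMap.id_apply,
      innerSL_apply_apply, smul_eq_mul, inner_neg_right, EuclideanSpace.inner_single_right,
      conj_trivial, PiLp.neg_apply, EuclideanSpace.single_apply, PiLp.proj_apply]
    have hxu : (x - y) i = u i := rfl
    rw [hxu]
    simp only [nsmul_eq_mul, Nat.cast_ofNat, one_mul, mul_one, mul_neg, neg_neg, neg_mul]
    by_cases hij : i = j
    · simp only [hij, if_pos rfl, ↓reduceIte]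
      field_simp
      ring
    · simp only [if_neg hij]
      field_simp
      ring
  rw [Finset.sum_congr rfl (fun j _ => hval j)]
  -- compute the sum
  have hqt : ∑ j : Fin 3, q j * u j = t := by
    rw [htdef]
    rw [PiLp.inner_apply]
    simp [RCLike.inner_apply, conj_trivial, mul_comm]
  have hqq : ∑ j : Fin 3, q j * q j = ‖q‖ ^ 2 := by
    rw [← real_inner_self_eq_norm_sq, PiLp.inner_apply]
    simp [RCLike.inner_apply, conj_trivial, sq]
  have expand : ∀ j : Fin 3, (if i = j then (1:ℝ) else 0) * q j / d - u i * q j * (u j / r + q j) / d ^ 2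
      = (if i = j then q j / d else 0) - (u i / (r * d ^ 2)) * (q j * u j) - (u i / d ^ 2) * (q j * q j) := by
    intro j
    by_cases hij : i = j
    · simp only [hij, if_pos rfl, ↓reduceIte]
      field_simp
      ring
    · simp only [if_neg hij]
      field_simp
      ring
  rw [Finset.sum_congr rfl (fun j _ => expand j)]
  rw [Finset.sum_sub_distrib, Finset.sum_sub_distrib, ← Finset.mul_sum, ← Finset.mul_sum,
    hqt, hqq, Finset.sum_ite_eq]
  simp only [Finset.mem_univ, if_pos]
  -- now bound |q i / d - u i / (r * d ^ 2) * t - u i / d ^ 2 * ‖q‖ ^ 2|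
  set P : ℝ := (p0 p ^ 2)⁻¹ with hPdef
  have hP : 0 < P := inv_pos.mpr hp2
  have hq2 : ‖q‖ ^ 2 = 1 - P := by
    have h := one_sub_sq_phat p; rw [← hqdef] at h; rw [hPdef]; linarith
  have htd : t = d - r := by rw [hddef]; ring
  have hrewrite : q i / d - u i / (r * d ^ 2) * t - u i / d ^ 2 * ‖q‖ ^ 2
      = q i / d - u i / (r * d) + (u i * P) / d ^ 2 := by
    rw [hq2, htd]
    field_simp
    ring
  rw [hrewrite]
  have hqi : |q i| ≤ 1 := le_trans (coord_abs_le q i) hq1.le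
  have hui : |u i| ≤ r := coord_abs_le u i
  have hd2 : (0:ℝ) < d ^ 2 := pow_pos hd_pos 2
  have hrd : (0:ℝ) < r * d := mul_pos hr hd_pos
  have hKd : 1 / d ≤ 2 * p0 p ^ 2 / r := by
    rw [div_le_div_iff₀ hd_pos hr]
    rw [div_le_iff₀ (by nlinarith : (0:ℝ) < 2 * p0 p ^ 2)] at hd_lb
    nlinarith
  have hA : |q i / d| ≤ 2 * p0 p ^ 2 / r := by
    rw [abs_div, abs_of_pos hd_pos]
    calc |q i| / d ≤ 1 / d := by gcongr
      _ ≤ 2 * p0 p ^ 2 / r := hKd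
  have hB : |u i / (r * d)| ≤ 2 * p0 p ^ 2 / r := by
    rw [abs_div, abs_of_pos hrd]
    calc |u i| / (r * d) ≤ r / (r * d) := by gcongr
      _ = 1 / d := by field_simp
      _ ≤ 2 * p0 p ^ 2 / r := hKd
  have hC : |u i * P / d ^ 2| ≤ 4 * p0 p ^ 2 / r := by
    rw [abs_div, abs_of_pos hd2, abs_mul, abs_of_pos hP]
    rw [div_le_div_iff₀ hd2 hr]
    -- |u i| * P * r ≤ 4 p₀² d²
    have h1 : r ≤ d * (2 * p0 p ^ 2) := by
      rw [div_le_iff₀ (by nlinarith : (0:ℝ) < 2 * p0 p ^ 2)] at hd_lb; linarith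
    have h2 : r * r ≤ d ^ 2 * (4 * p0 p ^ 2 * p0 p ^ 2) := by
      have h2' : r * r ≤ (d * (2 * p0 p ^ 2)) * (d * (2 * p0 p ^ 2)) :=
        mul_le_mul h1 h1 hr.le (mul_nonneg hd_pos.le (by nlinarith))
      calc r * r ≤ (d * (2 * p0 p ^ 2)) * (d * (2 * p0 p ^ 2)) := h2'
        _ = d ^ 2 * (4 * p0 p ^ 2 * p0 p ^ 2) := by ring
    have hPp : P * p0 p ^ 2 = 1 := by rw [hPdef]; field_simp [(p0_pos p).ne']
    calc |u i| * P * r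
        ≤ r * P * r := mul_le_mul_of_nonneg_right (mul_le_mul_of_nonneg_right hui hP.le) hr.le
      _ = r * r * P := by ring
      _ ≤ d ^ 2 * (4 * p0 p ^ 2 * p0 p ^ 2) * P := mul_le_mul_of_nonneg_right h2 hP.le
      _ = 4 * p0 p ^ 2 * d ^ 2 * (P * p0 p ^ 2) := by ring
      _ = 4 * p0 p ^ 2 * d ^ 2 := by rw [hPp]; ring
  calc |q i / d - u i / (r * d) + u i * P / d ^ 2|
      ≤ |q i / d - u i / (r * d)| + |u i * P / d ^ 2| := abs_add_le _ _
    _ ≤ |q i / d| + |u i / (r * d)| + |u i * P / d ^ 2| := by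
        have := abs_sub (q i / d) (u i / (r * d)); linarith
    _ ≤ 2 * p0 p ^ 2 / r + 2 * p0 p ^ 2 / r + 4 * p0 p ^ 2 / r := by linarith
    _ = 8 * p0 p ^ 2 / r := by ring

end partb


/-- (a) `|b_{ij}(ω,p)| ≤ 2p₀² + 1` for all unit `ω`, all `p` and all `i,j`; and
(b) there is an absolute constant `C` such that for fixed `x, p`, with `ω(y) = (x−y)/|x−y|`,
`|Σ_j ∂_{y_j} b_{ij}(ω(y),p)| ≤ C p₀²/|x − y|` for each `i` and all `y ≠ x`. -/
theorem stmt6 :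
    (∀ (ω p : E3), ‖ω‖ = 1 → ∀ i j : Fin 3, |bmat ω p i j| ≤ 2 * (p0 p) ^ 2 + 1) ∧
    ∃ C : ℝ, 0 < C ∧ ∀ (x p y : E3), y ≠ x → ∀ i : Fin 3,
      |∑ j : Fin 3,
          fderiv ℝ (fun z : E3 => bmat (‖x - z‖⁻¹ • (x - z)) p i j) y
            (EuclideanSpace.single j 1)|
        ≤ C * (p0 p) ^ 2 / ‖x - y‖ := by
  exact ⟨fun ω p hω i j => parta ω p hω i j, 8, by norm_num,
    fun x p y hy i => partb x p y hy i⟩
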